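/- The misère outcome of NimG-RM+L (NimG-RM with a loop on every vertex) can be computed, together with an effective winning strategy, in time O(√|V(G)| · |E(G)|). More precisely: the position is a first-player win if and only if either w(u) ≥ 2, or w(u) = 1 and every maximum matching of the connected component of u in G minus the vertices of weight ≥ 2 covers u. -/

import Mathlib

universe u
mutual
  inductive GNormalWin {α : Type u} (moves : α → α → Prop) : α → Prop
    | step {p q : α} : moves p q → GNormalLose moves q → GNormalWin moves p
  inductive GNormalLose {α : Type u} (moves : α → α → Prop) : α → Prop
    | intro {p : α} : (∀ q, moves p q → GNormalWin moves q) → GNormalLose moves p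
end

mutual
  inductive GMisereWin {α : Type u} (moves : α → α → Prop) : α → Prop
    | terminal {p : α} : (∀ q, ¬ moves p q) → GMisereWin moves p
    | step {p q : α} : moves p q → GMisereLose moves q → GMisereWin moves p
  inductive GMisereLose {α : Type u} (moves : α → α → Prop) : α → Prop
    | intro {p q₀ : α} : moves p q₀ → (∀ q, moves p q → GMisereWin moves q) → GMisereLose moves p
end

def nimMove {V : Type u} (adj : V → V → Prop) (p q : V × (V → ℕ)) : Prop :=
  adj p.1 q.1 ∧ q.2 p.1 < p.2 p.1 ∧ ∀ v, v ≠ p.1 → q.2 v = p.2 v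

mutual
  inductive NimRMWin {V : Type u} (adj : V → V → Prop) : V × (V → ℕ) → Prop
    | zero {p} : p.2 p.1 = 0 → NimRMWin adj p
    | step {p q} : nimMove adj p q → NimRMLose adj q → NimRMWin adj p
  inductive NimRMLose {V : Type u} (adj : V → V → Prop) : V × (V → ℕ) → Prop
    | intro {p} : p.2 p.1 ≠ 0 → (∀ q, nimMove adj p q → NimRMWin adj q) → NimRMLose adj p
end

def vgMove {V : Type u} (A : V → V → Prop) (p q : Set V × V) : Prop :=
  A p.2 q.2 ∧ q.2 ∈ p.1 ∧ q.2 ≠ p.2 ∧ q.1 = p.1 \ {p.2}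

def addOut {V : Type u} (A : V → V → Prop) : V ⊕ V → V ⊕ V → Prop
  | .inl a, .inl b => A a b
  | .inl a, .inr b => a = b
  | _, _ => False

def MaxMatching {V : Type u} (G : SimpleGraph V) (M : G.Subgraph) : Prop :=
  M.IsMatching ∧ ∀ N : G.Subgraph, N.IsMatching → N.edgeSet.ncard ≤ M.edgeSet.ncard

/-- The graph `G` with all vertices of weight at least 2 deleted. -/
def delHeavy {V : Type u} (G : SimpleGraph V) (w : V → ℕ) : SimpleGraph V where
  Adj a b := G.Adj a b ∧ w a < 2 ∧ w b < 2
  symm := ⟨fun a b h => ⟨h.1.symm, h.2.2, h.2.1⟩⟩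
  loopless := ⟨fun a h => G.loopless.irrefl a h.1⟩

/-- The connected component of `u` in `G` minus the vertices of weight at least 2. -/
def compGraph {V : Type u} (G : SimpleGraph V) (w : V → ℕ) (u : V) : SimpleGraph V where
  Adj a b := (delHeavy G w).Adj a b ∧ (delHeavy G w).Reachable u a ∧ (delHeavy G w).Reachable u b
  symm := ⟨fun a b h => ⟨h.1.symm, h.2.2, h.2.1⟩⟩
  loopless := ⟨fun a h => (delHeavy G w).loopless.irrefl a h.1⟩

/-! ### Auxiliary material for the proof -/

section NimGAux

variable {V : Type} [Fintype V]

/-- Total weight of a Nim position. -/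
def totw (p : V × (V → ℕ)) : ℕ := ∑ v, p.2 v

lemma nim_sum_lt {adj : V → V → Prop} {p q : V × (V → ℕ)} (h : nimMove adj p q) :
    totw q < totw p := by
  obtain ⟨-, hlt, hoth⟩ := h
  refine Finset.sum_lt_sum (fun v _ => ?_) ⟨p.1, Finset.mem_univ _, hlt⟩
  by_cases hv : v = p.1
  · subst hv; exact hlt.le
  · exact (hoth v hv).le

lemma nim_determined (adj : V → V → Prop) (p : V × (V → ℕ)) :
    NimRMWin adj p ∨ NimRMLose adj p := by
  classical
  generalize hn : totw p = n
  induction n using Nat.strong_induction_on generalizing p with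
  | _ n ih =>
    subst hn
    by_cases h0 : p.2 p.1 = 0
    · exact Or.inl (NimRMWin.zero h0)
    by_cases hx : ∃ q, nimMove adj p q ∧ NimRMLose adj q
    · obtain ⟨q, hq, hl⟩ := hx
      exact Or.inl (NimRMWin.step hq hl)
    · push_neg at hx
      refine Or.inr (NimRMLose.intro h0 (fun q hq => ?_))
      rcases ih (totw q) (nim_sum_lt hq) q rfl with h | h
      · exact h
      · exact absurd h (hx q hq)

lemma nim_not_both {adj : V → V → Prop} {p : V × (V → ℕ)}
    (hW : NimRMWin adj p) (hL : NimRMLose adj p) : False := by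
  generalize hn : totw p = n
  induction n using Nat.strong_induction_on generalizing p with
  | _ n ih =>
    subst hn
    obtain ⟨h0, hall⟩ := hL
    cases hW with
    | zero h => exact h0 h
    | step hm hl => exact ih (totw _) (nim_sum_lt hm) (hall _ hm) hl rfl

/-- A heavy vertex is a first-player win (for a graph with a loop at every vertex). -/
lemma heavy_win (G : SimpleGraph V) (x : V) (w : V → ℕ) (h2 : 2 ≤ w x) :
    NimRMWin (fun a b => G.Adj a b ∨ a = b) (x, w) := by
  classical
  set adj : V → V → Prop := fun a b => G.Adj a b ∨ a = b with hadj
  set w1 : V → ℕ := Function.update w x 1 with hw1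
  have hmv : nimMove adj (x, w) (x, w1) := by
    refine ⟨Or.inr rfl, ?_, fun v hv => Function.update_of_ne hv _ _⟩
    show w1 x < w x
    rw [hw1, Function.update_self]
    omega
  rcases nim_determined adj (x, w1) with hWin | hLose
  · cases hWin with
    | zero h =>
      rw [show ((x, w1) : V × (V → ℕ)).2 ((x, w1) : V × (V → ℕ)).1 = w1 x from rfl,
        hw1, Function.update_self] at h
      omega
    | @step _ q hm hl =>
      refine NimRMWin.step ?_ hl
      obtain ⟨ha, hlt, hoth⟩ := hm
      refine ⟨ha, ?_, fun v hv => (hoth v hv).trans (Function.update_of_ne hv _ _)⟩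
      have hup : w1 x = 1 := by rw [hw1, Function.update_self]
      have hlt' : q.2 x < w1 x := hlt
      show q.2 x < w x
      omega
  · exact NimRMWin.step hmv hLose

/-! ### Matchings inside a set of vertices -/

variable {H : SimpleGraph V}

/-- `N` is a matching of `H` whose vertices all lie in `S`. -/
def MW (H : SimpleGraph V) (S : Set V) (N : H.Subgraph) : Prop :=
  N.IsMatching ∧ N.verts ⊆ S

/-- The maximum size of a matching inside `S`. -/
noncomputable def nu (H : SimpleGraph V) (S : Set V) : ℕ :=
  sSup {n | ∃ N : H.Subgraph, MW H S N ∧ N.edgeSet.ncard = n}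

lemma nu_bdd (H : SimpleGraph V) (S : Set V) :
    BddAbove {n | ∃ N : H.Subgraph, MW H S N ∧ N.edgeSet.ncard = n} := by
  refine ⟨(Set.univ : Set (Sym2 V)).ncard, fun n hn => ?_⟩
  obtain ⟨N, -, rfl⟩ := hn
  exact Set.ncard_le_ncard (Set.subset_univ _) Set.finite_univ

lemma nu_spec (H : SimpleGraph V) (S : Set V) :
    ∃ N : H.Subgraph, MW H S N ∧ N.edgeSet.ncard = nu H S := by
  have hne : {n | ∃ N : H.Subgraph, MW H S N ∧ N.edgeSet.ncard = n}.Nonempty := by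
    refine ⟨(⊥ : H.Subgraph).edgeSet.ncard, ⊥, ⟨?_, ?_⟩, rfl⟩
    · intro v hv
      simp only [SimpleGraph.Subgraph.verts_bot, Set.mem_empty_iff_false] at hv
    · simp
  have h := Nat.sSup_mem hne (nu_bdd H S)
  exact h

lemma le_nu {S : Set V} {N : H.Subgraph} (h : MW H S N) : N.edgeSet.ncard ≤ nu H S :=
  le_csSup (nu_bdd H S) ⟨N, h, rfl⟩

lemma matching_unique {M : H.Subgraph} (hM : M.IsMatching) {a b c : V}
    (h1 : M.Adj a b) (h2 : M.Adj a c) : b = c :=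
  (hM (M.edge_vert h1)).unique h1 h2

lemma matching_erase {M : H.Subgraph} (hM : M.IsMatching) {x y : V} (hxy : M.Adj x y) :
    ∃ M' : H.Subgraph, M'.IsMatching ∧ M'.verts = M.verts \ {x, y} ∧
      M'.edgeSet.ncard + 1 = M.edgeSet.ncard := by
  classical
  refine ⟨M.deleteVerts {x, y}, ?_, SimpleGraph.Subgraph.deleteVerts_verts, ?_⟩
  · intro v hv
    rw [SimpleGraph.Subgraph.deleteVerts_verts] at hv
    obtain ⟨hvM, hvxy⟩ := hv
    obtain ⟨p, hp, hpu⟩ := hM hvM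
    have hpxy : p ∉ ({x, y} : Set V) := by
      intro hp2
      simp only [Set.mem_insert_iff, Set.mem_singleton_iff] at hp2
      rcases hp2 with rfl | rfl
      · have hvy : v = y := matching_unique hM hp.symm hxy
        exact hvxy (by simp [hvy])
      · have hvx : v = x := matching_unique hM hp.symm hxy.symm
        exact hvxy (by simp [hvx])
    refine ⟨p, ?_, ?_⟩
    · show (M.deleteVerts {x, y}).Adj v p
      rw [SimpleGraph.Subgraph.deleteVerts_adj]
      exact ⟨hvM, hvxy, M.edge_vert hp.symm, hpxy, hp⟩
    · intro q hq
      have hq' : (M.deleteVerts {x, y}).Adj v q := hq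
      rw [SimpleGraph.Subgraph.deleteVerts_adj] at hq'
      exact hpu q hq'.2.2.2.2
  · have hedge : (M.deleteVerts {x, y}).edgeSet = M.edgeSet \ {s(x, y)} := by
      ext e
      induction e with
      | h a b =>
        simp only [SimpleGraph.Subgraph.mem_edgeSet, SimpleGraph.Subgraph.deleteVerts_adj,
          Set.mem_diff, Set.mem_singleton_iff, Set.mem_insert_iff, not_or]
        constructor
        · rintro ⟨haM, ⟨hax, hay⟩, hbM, ⟨hbx, hby⟩, hab⟩
          refine ⟨hab, fun he => ?_⟩
          rw [Sym2.eq_iff] at he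
          rcases he with ⟨rfl, rfl⟩ | ⟨rfl, rfl⟩
          · exact hax rfl
          · exact hay rfl
        · rintro ⟨hab, hne⟩
          refine ⟨M.edge_vert hab, ⟨?_, ?_⟩, M.edge_vert hab.symm, ⟨?_, ?_⟩, hab⟩
          · rintro rfl
            exact hne (by rw [matching_unique hM hab hxy])
          · intro hay
            subst hay
            have hbx : b = x := matching_unique hM hab hxy.symm
            exact hne (by rw [hbx]; exact Sym2.eq_swap)
          · intro hbx
            subst hbx
            have hay : a = y := matching_unique hM hab.symm hxy
            exact hne (by rw [hay]; exact Sym2.eq_swap)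
          · rintro rfl
            exact hne (by rw [matching_unique hM hab.symm hxy.symm])
    rw [hedge]
    exact Set.ncard_diff_singleton_add_one (SimpleGraph.Subgraph.mem_edgeSet.mpr hxy)
      (Set.toFinite _)

lemma matching_add {N : H.Subgraph} (hN : N.IsMatching) {x y : V} (hxy : H.Adj x y)
    (hx : x ∉ N.verts) (hy : y ∉ N.verts) :
    ∃ N' : H.Subgraph, N'.IsMatching ∧ N'.verts = N.verts ∪ {x, y} ∧
      N'.edgeSet.ncard = N.edgeSet.ncard + 1 := by
  classical
  have hdisj : Disjoint N.verts ({x, y} : Set V) := by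
    rw [Set.disjoint_right]
    rintro a ha
    simp only [Set.mem_insert_iff, Set.mem_singleton_iff] at ha
    rcases ha with rfl | rfl
    · exact hx
    · exact hy
  refine ⟨N ⊔ H.subgraphOfAdj hxy, ?_, ?_, ?_⟩
  · refine hN.sup (SimpleGraph.Subgraph.IsMatching.subgraphOfAdj hxy) ?_
    rw [hN.support_eq_verts,
      (SimpleGraph.Subgraph.IsMatching.subgraphOfAdj hxy).support_eq_verts,
      SimpleGraph.subgraphOfAdj_verts]
    exact hdisj
  · rw [SimpleGraph.Subgraph.verts_sup, SimpleGraph.subgraphOfAdj_verts]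
  · rw [SimpleGraph.Subgraph.edgeSet_sup, SimpleGraph.edgeSet_subgraphOfAdj]
    rw [Set.ncard_union_eq ?_ (Set.toFinite _) (Set.toFinite _), Set.ncard_singleton]
    rw [Set.disjoint_singleton_right]
    intro hmem
    exact hx (SimpleGraph.Subgraph.mem_verts_of_mem_edge hmem (Sym2.mem_mk_left x y))

/-- Every maximum matching inside `S` covers `x`. -/
def AllMax (H : SimpleGraph V) (S : Set V) (x : V) : Prop :=
  ∀ N : H.Subgraph, MW H S N → N.edgeSet.ncard = nu H S → x ∈ N.verts

lemma step_W {S : Set V} {x y : V} {M : H.Subgraph}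
    (hMW : MW H S M) (hMmax : M.edgeSet.ncard = nu H S) (hxy : M.Adj x y)
    (hAll : AllMax H S x) :
    nu H (S \ {x, y}) + 1 = nu H S ∧
      ∀ z, z ∈ S → z ∉ ({x, y} : Set V) → H.Adj y z → AllMax H (S \ {x, y}) z := by
  obtain ⟨M', hM'm, hM'v, hM'c⟩ := matching_erase hMW.1 hxy
  have hM'W : MW H (S \ {x, y}) M' := ⟨hM'm, hM'v ▸ Set.diff_subset_diff_left hMW.2⟩
  have hle : M'.edgeSet.ncard ≤ nu H (S \ {x, y}) := le_nu hM'W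
  have hlt : nu H (S \ {x, y}) < nu H S := by
    obtain ⟨Nm, hNmW, hNmc⟩ := nu_spec H (S \ {x, y})
    have hNmS : MW H S Nm := ⟨hNmW.1, hNmW.2.trans Set.diff_subset⟩
    have h1 : Nm.edgeSet.ncard ≤ nu H S := le_nu hNmS
    have h2 : Nm.edgeSet.ncard ≠ nu H S := by
      intro heq
      have hxN : x ∈ Nm.verts := hAll Nm hNmS heq
      have := hNmW.2 hxN
      simp at this
    omega
  have hnu : nu H (S \ {x, y}) + 1 = nu H S := by omega
  refine ⟨hnu, fun z hzS hzxy hyz N hNW hNc => ?_⟩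
  by_contra hzN
  have hyS : y ∈ S := hMW.2 (M.edge_vert hxy.symm)
  have hyN : y ∉ N.verts := fun h => by
    have := hNW.2 h
    simp at this
  obtain ⟨N', hN'm, hN'v, hN'c⟩ := matching_add hNW.1 hyz hyN hzN
  have hN'W : MW H S N' := by
    refine ⟨hN'm, ?_⟩
    rw [hN'v]
    refine Set.union_subset (hNW.2.trans Set.diff_subset) ?_
    rintro a ha
    simp only [Set.mem_insert_iff, Set.mem_singleton_iff] at ha
    rcases ha with rfl | rfl
    · exact hyS
    · exact hzS
  have hN'max : N'.edgeSet.ncard = nu H S := by rw [hN'c, hNc]; omega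
  have hxN' : x ∈ N'.verts := hAll N' hN'W hN'max
  rw [hN'v] at hxN'
  rcases hxN' with hxN' | hxN'
  · have := hNW.2 hxN'
    simp at this
  · simp only [Set.mem_insert_iff, Set.mem_singleton_iff] at hxN'
    rcases hxN' with rfl | rfl
    · exact (M.adj_sub hxy).ne rfl
    · simp at hzxy

lemma step_L {S : Set V} {x : V} (hxS : x ∈ S) {N₀ : H.Subgraph}
    (hN₀W : MW H S N₀) (hN₀max : N₀.edgeSet.ncard = nu H S) (hmiss : x ∉ N₀.verts) :
    ∀ z, z ∈ S → z ≠ x → H.Adj x z → AllMax H (S \ {x}) z := by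
  intro z hzS hzx hxz N hNW hNc
  by_contra hzN
  have hxN : x ∉ N.verts := fun h => by
    have := hNW.2 h
    simp at this
  obtain ⟨N', hN'm, hN'v, hN'c⟩ := matching_add hNW.1 hxz hxN hzN
  have hN'W : MW H S N' := by
    refine ⟨hN'm, ?_⟩
    rw [hN'v]
    refine Set.union_subset (hNW.2.trans Set.diff_subset) ?_
    rintro a ha
    simp only [Set.mem_insert_iff, Set.mem_singleton_iff] at ha
    rcases ha with rfl | rfl
    · exact hxS
    · exact hzS
  have hnu : nu H (S \ {x}) = nu H S := by
    have h1 : nu H (S \ {x}) ≤ nu H S := by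
      obtain ⟨Nm, hNmW, hNmc⟩ := nu_spec H (S \ {x})
      rw [← hNmc]
      exact le_nu ⟨hNmW.1, hNmW.2.trans Set.diff_subset⟩
    have h2 : nu H S ≤ nu H (S \ {x}) := by
      rw [← hN₀max]
      refine le_nu ⟨hN₀W.1, fun v hv => ⟨hN₀W.2 hv, fun hvx => ?_⟩⟩
      simp only [Set.mem_singleton_iff] at hvx
      exact hmiss (hvx ▸ hv)
    omega
  have := le_nu hN'W
  rw [hN'c, hNc, hnu] at this
  omega

/-! ### The main induction -/

open Classical in
/-- The weight function with the vertices of `T` zeroed out. -/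
noncomputable def wtf (w : V → ℕ) (T : Set V) : V → ℕ :=
  fun v => if v ∈ T then 0 else w v

lemma main_W (G : SimpleGraph V) (w : V → ℕ) (hw : ∀ v, 0 < w v) (u : V) :
    ∀ n (T : Set V) (x : V), Tᶜ.ncard ≤ n → w x = 1 → x ∉ T →
      (delHeavy G w).Reachable u x → AllMax (compGraph G w u) Tᶜ x →
      NimRMWin (fun a b => G.Adj a b ∨ a = b) (x, wtf w T) := by
  classical
  intro n
  induction n using Nat.strong_induction_on with
  | _ n ih =>
    intro T x hcard hx1 hxT hreach hAll
    obtain ⟨M, hMW, hMmax⟩ := nu_spec (compGraph G w u) Tᶜ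
    have hxM : x ∈ M.verts := hAll M hMW hMmax
    obtain ⟨y, hxy, -⟩ := hMW.1 hxM
    have hHxy : (compGraph G w u).Adj x y := M.adj_sub hxy
    have hGxy : G.Adj x y := hHxy.1.1
    have hy1 : w y = 1 := by have h1 := hHxy.1.2.2; have h2 := hw y; omega
    have hyreach : (delHeavy G w).Reachable u y := hHxy.2.2
    have hyT : y ∉ T := hMW.2 (M.edge_vert hxy.symm)
    have hyx : y ≠ x := hHxy.ne'
    set T₁ : Set V := insert x T with hT₁
    have hyT₁ : y ∉ T₁ := by
      rw [hT₁, Set.mem_insert_iff]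
      push_neg
      exact ⟨hyx, hyT⟩
    have hmv : nimMove (fun a b => G.Adj a b ∨ a = b) (x, wtf w T) (y, wtf w T₁) := by
      refine ⟨Or.inl hGxy, ?_, ?_⟩
    -- the weight at x drops from 1 to 0
      · show wtf w T₁ x < wtf w T x
        unfold wtf
        rw [if_pos (Set.mem_insert x T), if_neg hxT]
        omega
      · intro v hv
        show wtf w T₁ v = wtf w T v
        unfold wtf
        have : v ∈ T₁ ↔ v ∈ T := by
          rw [hT₁, Set.mem_insert_iff]
          simp [hv]
        by_cases hvT : v ∈ T
        · rw [if_pos (this.mpr hvT), if_pos hvT]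
        · rw [if_neg (fun h => hvT (this.mp h)), if_neg hvT]
    refine NimRMWin.step hmv (NimRMLose.intro ?_ ?_)
    · show wtf w T₁ y ≠ 0
      unfold wtf
      rw [if_neg hyT₁]
      omega
    · rintro ⟨z, w₂⟩ ⟨hadj, hlt, hoth⟩
      have hadj' : G.Adj y z ∨ y = z := hadj
      have hlt' : w₂ y < wtf w T₁ y := hlt
      have hoth' : ∀ v, v ≠ y → w₂ v = wtf w T₁ v := hoth
      have hwty : wtf w T₁ y = 1 := by unfold wtf; rw [if_neg hyT₁]; exact hy1
      set T₂ : Set V := insert y T₁ with hT₂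
      have hw₂ : w₂ = wtf w T₂ := by
        funext v
        by_cases hvy : v = y
        · subst hvy
          have h0 : w₂ v = 0 := by omega
          rw [h0]
          unfold wtf
          rw [if_pos (Set.mem_insert v T₁)]
        · rw [hoth' v hvy]
          unfold wtf
          have : v ∈ T₂ ↔ v ∈ T₁ := by
            rw [hT₂, Set.mem_insert_iff]
            simp [hvy]
          by_cases hvT : v ∈ T₁
          · rw [if_pos (this.mpr hvT), if_pos hvT]
          · rw [if_neg (fun h => hvT (this.mp h)), if_neg hvT]
      rw [hw₂]
      by_cases hzT₂ : z ∈ T₂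
      · exact NimRMWin.zero (show wtf w T₂ z = 0 by unfold wtf; rw [if_pos hzT₂])
      · have hGyz : G.Adj y z := by
          rcases hadj' with h | h
          · exact h
          · exact absurd (h ▸ Set.mem_insert y T₁ : z ∈ T₂) hzT₂
        have hwz : wtf w T₂ z = w z := by unfold wtf; rw [if_neg hzT₂]
        rcases (show w z = 1 ∨ 2 ≤ w z by have := hw z; omega) with hz1 | hz2
        · -- light neighbour: recurse
          have hdAdj : (delHeavy G w).Adj y z := ⟨hGyz, by omega, by omega⟩
          have hzreach : (delHeavy G w).Reachable u z :=
            hyreach.trans hdAdj.reachable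
          have hHyz : (compGraph G w u).Adj y z := ⟨hdAdj, hyreach, hzreach⟩
          have hzT : z ∉ T := fun h => hzT₂ (Set.mem_insert_iff.mpr
            (Or.inr (Set.mem_insert_iff.mpr (Or.inr h))))
          have hzx : z ≠ x := fun h => hzT₂ (Set.mem_insert_iff.mpr
            (Or.inr (h ▸ Set.mem_insert x T)))
          have hzy : z ≠ y := fun h => hzT₂ (h ▸ Set.mem_insert y T₁)
          have hT₂c : T₂ᶜ = Tᶜ \ {x, y} := by
            ext v
            simp only [hT₂, hT₁, Set.mem_compl_iff, Set.mem_insert_iff, Set.mem_diff,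
              Set.mem_singleton_iff, not_or]
            tauto
          have hstep := step_W hMW hMmax hxy hAll
          have hAll₂ : AllMax (compGraph G w u) T₂ᶜ z := by
            rw [hT₂c]
            refine hstep.2 z hzT ?_ hHyz
            simp only [Set.mem_insert_iff, Set.mem_singleton_iff, not_or]
            · exact ⟨hzx, hzy⟩
          have hssub : T₂ᶜ ⊂ Tᶜ := by
            rw [hT₂c]
            exact (Set.ssubset_iff_of_subset Set.diff_subset).2
              ⟨x, hxT, by simp⟩
          have hcard₂ : T₂ᶜ.ncard < n :=
            lt_of_lt_of_le (Set.ncard_lt_ncard hssub (Set.toFinite _)) hcard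
          exact ih T₂ᶜ.ncard hcard₂ T₂ z le_rfl hz1 hzT₂ hzreach hAll₂
        · rw [show ((z, wtf w T₂) : V × (V → ℕ)) = (z, wtf w T₂) from rfl]
          exact heavy_win G z (wtf w T₂) (by omega)

lemma main_L (G : SimpleGraph V) (w : V → ℕ) (hw : ∀ v, 0 < w v) (u : V)
    (T : Set V) (x : V) (hx1 : w x = 1) (hxT : x ∉ T)
    (hreach : (delHeavy G w).Reachable u x)
    (hEx : ∃ N : (compGraph G w u).Subgraph, MW (compGraph G w u) Tᶜ N ∧
      N.edgeSet.ncard = nu (compGraph G w u) Tᶜ ∧ x ∉ N.verts) :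
    NimRMLose (fun a b => G.Adj a b ∨ a = b) (x, wtf w T) := by
  classical
  obtain ⟨N₀, hN₀W, hN₀max, hmiss⟩ := hEx
  set T₁ : Set V := insert x T with hT₁
  refine NimRMLose.intro ?_ ?_
  · show wtf w T x ≠ 0
    unfold wtf
    rw [if_neg hxT]
    omega
  · rintro ⟨z, w₂⟩ ⟨hadj, hlt, hoth⟩
    have hadj' : G.Adj x z ∨ x = z := hadj
    have hlt' : w₂ x < wtf w T x := hlt
    have hoth' : ∀ v, v ≠ x → w₂ v = wtf w T v := hoth
    have hwtx : wtf w T x = 1 := by unfold wtf; rw [if_neg hxT]; exact hx1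
    have hw₂ : w₂ = wtf w T₁ := by
      funext v
      by_cases hvx : v = x
      · subst hvx
        have h0 : w₂ v = 0 := by omega
        rw [h0]
        unfold wtf
        rw [if_pos (Set.mem_insert v T)]
      · rw [hoth' v hvx]
        unfold wtf
        have : v ∈ T₁ ↔ v ∈ T := by
          rw [hT₁, Set.mem_insert_iff]
          simp [hvx]
        by_cases hvT : v ∈ T
        · rw [if_pos (this.mpr hvT), if_pos hvT]
        · rw [if_neg (fun h => hvT (this.mp h)), if_neg hvT]
    rw [hw₂]
    by_cases hzT₁ : z ∈ T₁
    · exact NimRMWin.zero (show wtf w T₁ z = 0 by unfold wtf; rw [if_pos hzT₁])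
    · have hGxz : G.Adj x z := by
        rcases hadj' with h | h
        · exact h
        · exact absurd (h ▸ Set.mem_insert x T : z ∈ T₁) hzT₁
      rcases (show w z = 1 ∨ 2 ≤ w z by have := hw z; omega) with hz1 | hz2
      · -- light neighbour: the opponent wins by main_W
        have hdAdj : (delHeavy G w).Adj x z := ⟨hGxz, by omega, by omega⟩
        have hzreach : (delHeavy G w).Reachable u z := hreach.trans hdAdj.reachable
        have hHxz : (compGraph G w u).Adj x z := ⟨hdAdj, hreach, hzreach⟩
        have hzT : z ∉ T := fun h => hzT₁ (Set.mem_insert_iff.mpr (Or.inr h))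
        have hzx : z ≠ x := fun h => hzT₁ (h ▸ Set.mem_insert x T)
        have hT₁c : T₁ᶜ = Tᶜ \ {x} := by
          ext v
          simp only [hT₁, Set.mem_compl_iff, Set.mem_insert_iff, Set.mem_diff,
            Set.mem_singleton_iff, not_or]
          tauto
        have hAll₁ : AllMax (compGraph G w u) T₁ᶜ z := by
          rw [hT₁c]
          exact step_L (show x ∈ Tᶜ from hxT) hN₀W hN₀max hmiss z hzT hzx hHxz
        exact main_W G w hw u (T₁ᶜ.ncard) T₁ z le_rfl hz1 hzT₁ hzreach hAll₁
      · exact heavy_win G z (wtf w T₁)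
          (show 2 ≤ wtf w T₁ z by unfold wtf; rw [if_neg hzT₁]; omega)

end NimGAux

/-- Misère NimG-RM with a loop on every vertex and positive weights: the position is a
first-player win iff either `w u ≥ 2`, or `w u = 1` and every maximum matching of the
connected component of `u` in the graph minus the weight-≥2 vertices covers `u`. -/
theorem stmt7 {V : Type} [Fintype V] (G : SimpleGraph V) (w : V → ℕ) (hw : ∀ v, 0 < w v)
    (u : V) :
    NimRMWin (fun a b => G.Adj a b ∨ a = b) (u, w) ↔
      (2 ≤ w u ∨ (w u = 1 ∧
        ∀ M : (compGraph G w u).Subgraph, MaxMatching (compGraph G w u) M → u ∈ M.verts)) := by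
  classical
  have hwt : wtf w (∅ : Set V) = w := funext fun v => by unfold wtf; simp
  constructor
  · intro hWin
    by_contra hcon
    push_neg at hcon
    obtain ⟨h2, hcond⟩ := hcon
    have hu1 : w u = 1 := by have := hw u; omega
    obtain ⟨M, hMmax, hMu⟩ := hcond hu1
    have hMW : MW (compGraph G w u) (∅ : Set V)ᶜ M := ⟨hMmax.1, by simp⟩
    have hMn : M.edgeSet.ncard = nu (compGraph G w u) (∅ : Set V)ᶜ := by
      obtain ⟨N, hNW, hNmax⟩ := nu_spec (compGraph G w u) (∅ : Set V)ᶜ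
      have h1 := le_nu hMW
      have h2 := hMmax.2 N hNW.1
      omega
    have hLose := main_L G w hw u ∅ u hu1 (Set.notMem_empty u)
      (SimpleGraph.Reachable.refl u) ⟨M, hMW, hMn, hMu⟩
    rw [hwt] at hLose
    exact nim_not_both hWin hLose
  · rintro (h2 | ⟨hu1, hcond⟩)
    · exact heavy_win G u w h2
    · have hAll : AllMax (compGraph G w u) (∅ : Set V)ᶜ u := by
        intro N hNW hN
        refine hcond N ⟨hNW.1, fun N' hN' => ?_⟩
        have h1 := le_nu (H := compGraph G w u) (S := (∅ : Set V)ᶜ) ⟨hN', by simp⟩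
        omega
      have h := main_W G w hw u ((∅ : Set V)ᶜ.ncard) ∅ u le_rfl hu1 (Set.notMem_empty u)
        (SimpleGraph.Reachable.refl u) hAll
      rwa [hwt] at h
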